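/- For every integer n ≥ 2, the sum ∑_{k=1}^{n-1} ζ(2k) ζ(2n-2k) equals ((2n+1)/2) ζ(2n). -/

import Mathlib

open PowerSeries Finset Nat

noncomputable def gB (k : ℕ) : ℚ := bernoulli k / k !

lemma derivative_exp' : d⁄dX ℚ (PowerSeries.exp ℚ) = PowerSeries.exp ℚ := by
  ext n
  rw [PowerSeries.coeff_derivative, PowerSeries.coeff_exp, PowerSeries.coeff_exp]
  simp only [Algebra.algebraMap_self, RingHom.id_apply, Nat.factorial_succ]
  have h1 : ((n:ℚ) + 1) ≠ 0 := by positivity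
  have h2 : ((n ! : ℚ)) ≠ 0 := by exact_mod_cast Nat.factorial_ne_zero n
  push_cast
  field_simp

lemma key_ps :
    (bernoulliPowerSeries ℚ) ^ 2
      = bernoulliPowerSeries ℚ - X * bernoulliPowerSeries ℚ
        - X * d⁄dX ℚ (bernoulliPowerSeries ℚ) := by
  set B := bernoulliPowerSeries ℚ with hB
  have h0 : B * (PowerSeries.exp ℚ - 1) = X := bernoulliPowerSeries_mul_exp_sub_one ℚ
  have hde : d⁄dX ℚ (PowerSeries.exp ℚ - 1) = PowerSeries.exp ℚ := by
    rw [map_sub, derivative_exp', (d⁄dX ℚ).map_one_eq_zero, sub_zero]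
  have h1 : B * PowerSeries.exp ℚ + (PowerSeries.exp ℚ - 1) * d⁄dX ℚ B = 1 := by
    have h := congrArg (d⁄dX ℚ) h0
    rw [Derivation.leibniz, hde, PowerSeries.derivative_X, smul_eq_mul, smul_eq_mul] at h
    exact h
  linear_combination B * h1 - (d⁄dX ℚ B) * h0 - B * h0

lemma gB_conv (N : ℕ) (hN : 1 ≤ N) :
    ∑ k ∈ range (N + 1), gB k * gB (N - k) = (1 - N) * gB N - gB (N - 1) := by
  have key := congrArg (PowerSeries.coeff (R := ℚ) N) key_ps
  rw [sq, PowerSeries.coeff_mul, Nat.sum_antidiagonal_eq_sum_range_succ_mk] at key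
  obtain ⟨M, rfl⟩ := Nat.exists_eq_add_of_le hN
  rw [show 1 + M = M + 1 by omega] at key ⊢
  rw [map_sub, map_sub, PowerSeries.coeff_succ_X_mul, PowerSeries.coeff_succ_X_mul,
    PowerSeries.coeff_derivative] at key
  simp only [bernoulliPowerSeries, PowerSeries.coeff_mk, Algebra.algebraMap_self,
    RingHom.id_apply] at key
  rw [show M + 1 - 1 = M by omega]
  unfold gB
  rw [key]
  push_cast
  ring

lemma gB_odd (m : ℕ) (h1 : Odd m) (h3 : 3 ≤ m) : gB m = 0 := by
  unfold gB
  rw [bernoulli_eq_bernoulli'_of_ne_one (by omega),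
    bernoulli'_eq_zero_of_odd h1 (by omega), zero_div]

lemma gB_zero : gB 0 = 1 := by simp [gB]

lemma gB_even_conv (n : ℕ) (hn : 2 ≤ n) :
    ∑ k ∈ Icc 1 (n - 1), gB (2 * k) * gB (2 * (n - k))
      = -(2 * n + 1) * gB (2 * n) := by
  obtain ⟨m, rfl⟩ : ∃ m, n = m + 2 := ⟨n - 2, by omega⟩
  have key := gB_conv (2 * (m + 2)) (by omega)
  set f : ℕ → ℚ := fun k => gB k * gB (2 * (m + 2) - k) with hf
  have hsplit := Finset.sum_filter_add_sum_filter_not (range (2 * (m + 2) + 1)) (fun k => Even k) f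
  have hodd : ∑ k ∈ (range (2 * (m + 2) + 1)).filter (fun k => ¬ Even k), f k = 0 := by
    apply Finset.sum_eq_zero
    intro k hk
    simp only [Finset.mem_filter, Finset.mem_range] at hk
    have hko : Odd k := Nat.odd_iff.mpr (by
      rcases Nat.even_or_odd k with h | h
      · exact absurd h hk.2
      · exact Nat.odd_iff.mp h)
    rcases eq_or_ne k 1 with rfl | hk1
    · have : gB (2 * (m + 2) - 1) = 0 := gB_odd _ ⟨m + 1, by omega⟩ (by omega)
      simp [hf, this]
    · have : gB k = 0 := gB_odd _ hko (by
        rcases hko with ⟨t, rfl⟩; omega)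
      simp [hf, this]
  have himg : (range (2 * (m + 2) + 1)).filter (fun k => Even k)
      = (range (m + 3)).image (fun j => 2 * j) := by
    ext k
    simp only [Finset.mem_filter, Finset.mem_range, Finset.mem_image]
    constructor
    · rintro ⟨hk, j, rfl⟩
      exact ⟨j, by omega, by ring⟩
    · rintro ⟨j, hj, rfl⟩
      exact ⟨by omega, j, by ring⟩
  have hinj : ∀ a ∈ range (m + 3), ∀ b ∈ range (m + 3), 2 * a = 2 * b → a = b := by
    intros; omega
  have heven : ∑ k ∈ (range (2 * (m + 2) + 1)).filter (fun k => Even k), f k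
      = ∑ j ∈ range (m + 3), f (2 * j) := by
    rw [himg, Finset.sum_image hinj]
  have hmid : ∑ j ∈ Icc 1 (m + 1), f (2 * j) = ∑ i ∈ range (m + 1), f (2 * (1 + i)) := by
    rw [← Finset.Ico_add_one_right_eq_Icc, Finset.sum_Ico_eq_sum_range]
    norm_num
  have hrange : ∑ j ∈ range (m + 3), f (2 * j)
      = f 0 + (∑ j ∈ Icc 1 (m + 1), f (2 * j)) + f (2 * (m + 2)) := by
    rw [Finset.sum_range_succ, Finset.sum_range_succ', hmid]
    have : ∀ i, f (2 * (i + 1)) = f (2 * (1 + i)) := by intro i; congr 1; omega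
    simp only [this]
    ring
  have hsum : ∑ k ∈ range (2 * (m + 2) + 1), f k
      = f 0 + (∑ j ∈ Icc 1 (m + 1), f (2 * j)) + f (2 * (m + 2)) := by
    rw [← hsplit, hodd, add_zero, heven, hrange]
  have hf0 : f 0 = gB (2 * (m + 2)) := by simp [hf, gB_zero]
  have hfn : f (2 * (m + 2)) = gB (2 * (m + 2)) := by simp [hf, gB_zero]
  have hmid2 : ∑ j ∈ Icc 1 (m + 1), f (2 * j)
      = ∑ k ∈ Icc 1 (m + 2 - 1), gB (2 * k) * gB (2 * (m + 2 - k)) := by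
    rw [show m + 2 - 1 = m + 1 by omega]
    apply Finset.sum_congr rfl
    intro k hk
    simp only [Finset.mem_Icc] at hk
    simp only [hf]
    congr 2
    omega
  have hend : gB (2 * (m + 2) - 1) = 0 := gB_odd _ ⟨m + 1, by omega⟩ (by omega)
  rw [hsum, hf0, hfn, hmid2, hend] at key
  push_cast at key ⊢
  linarith [key]

/-- The Riemann zeta value `ζ(s) = ∑_{k>0} k^{-s}` for a natural number exponent. -/
noncomputable def zetaVal (s : ℕ) : ℝ := ∑' k : ℕ+, (1 : ℝ) / (k : ℝ) ^ s

open Real in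
lemma zetaVal_eq (k : ℕ) (hk : k ≠ 0) :
    zetaVal (2 * k) = (-1 : ℝ) ^ (k + 1) * 2 ^ (2 * k) * π ^ (2 * k) / 4 * 2 * (gB (2 * k) : ℝ) := by
  have h := hasSum_zeta_nat hk
  have hinj : Function.Injective ((↑) : ℕ+ → ℕ) := fun a b h => PNat.coe_injective h
  have hzero : ∀ x ∉ Set.range ((↑) : ℕ+ → ℕ), (1 : ℝ) / (x : ℝ) ^ (2 * k) = 0 := by
    intro x hx
    have hx0 : x = 0 := by
      by_contra h0
      exact hx ⟨⟨x, Nat.pos_of_ne_zero h0⟩, rfl⟩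
    subst hx0
    rw [Nat.cast_zero, zero_pow (by omega), div_zero]
  have h2 : HasSum (fun n : ℕ+ => (1 : ℝ) / (n : ℝ) ^ (2 * k))
      ((-1 : ℝ) ^ (k + 1) * 2 ^ (2 * k - 1) * π ^ (2 * k) * (bernoulli (2 * k) : ℝ) / (2 * k)!) :=
    (Function.Injective.hasSum_iff hinj hzero).mpr h
  rw [zetaVal, h2.tsum_eq]
  have hpow : (2 : ℝ) ^ (2 * k) = 2 ^ (2 * k - 1) * 2 := by
    rw [← pow_succ]; congr 1; omega
  have hgB : (gB (2 * k) : ℝ) = (bernoulli (2 * k) : ℝ) / ((2 * k)! : ℝ) := by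
    rw [gB]; push_cast; ring
  rw [hgB, hpow]
  ring

open Real in
theorem zeta_even_convolution (n : ℕ) (hn : 2 ≤ n) :
    ∑ k ∈ Finset.Icc 1 (n - 1), zetaVal (2 * k) * zetaVal (2 * n - 2 * k)
      = ((2 * n + 1 : ℝ) / 2) * zetaVal (2 * n) := by
  have hstep : ∀ k ∈ Icc 1 (n - 1), zetaVal (2 * k) * zetaVal (2 * n - 2 * k)
      = ((-1 : ℝ) ^ n * 2 ^ (2 * n) * π ^ (2 * n) / 4) * ((gB (2 * k) * gB (2 * (n - k)) : ℚ) : ℝ) := by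
    intro k hk
    simp only [Finset.mem_Icc] at hk
    have hsub : 2 * n - 2 * k = 2 * (n - k) := by omega
    rw [hsub, zetaVal_eq k (by omega), zetaVal_eq (n - k) (by omega)]
    have e1 : (-1 : ℝ) ^ (k + 1) * (-1 : ℝ) ^ (n - k + 1) = (-1 : ℝ) ^ n := by
      rw [← pow_add, show (k + 1) + (n - k + 1) = n + 2 by omega, pow_add]
      norm_num
    have e2 : (2 : ℝ) ^ (2 * k) * (2 : ℝ) ^ (2 * (n - k)) = 2 ^ (2 * n) := by
      rw [← pow_add]; congr 1; omega
    have e3 : (π : ℝ) ^ (2 * k) * (π : ℝ) ^ (2 * (n - k)) = π ^ (2 * n) := by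
      rw [← pow_add]; congr 1; omega
    push_cast
    calc ((-1:ℝ)^(k+1) * 2^(2*k) * π^(2*k) / 4 * 2 * (gB (2*k) : ℝ)) *
          ((-1:ℝ)^(n-k+1) * 2^(2*(n-k)) * π^(2*(n-k)) / 4 * 2 * (gB (2*(n-k)) : ℝ))
        = (((-1:ℝ)^(k+1) * (-1:ℝ)^(n-k+1)) * ((2:ℝ)^(2*k) * 2^(2*(n-k)))
            * ((π:ℝ)^(2*k) * π^(2*(n-k))) / 4) * ((gB (2*k) : ℝ) * (gB (2*(n-k)) : ℝ)) := by
          ring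
      _ = ((-1 : ℝ) ^ n * 2 ^ (2 * n) * π ^ (2 * n) / 4) * ((gB (2*k) : ℝ) * (gB (2*(n-k)) : ℝ)) := by
          rw [e1, e2, e3]
  rw [Finset.sum_congr rfl hstep, ← Finset.mul_sum]
  have hcast : ∑ k ∈ Icc 1 (n - 1), ((gB (2 * k) * gB (2 * (n - k)) : ℚ) : ℝ)
      = ((∑ k ∈ Icc 1 (n - 1), gB (2 * k) * gB (2 * (n - k)) : ℚ) : ℝ) := by
    push_cast; rfl
  rw [hcast, gB_even_conv n hn, zetaVal_eq n (by omega)]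
  push_cast
  rw [pow_succ]
  ring
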